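/- arXiv:1903.06267 — 2 statements merged into one kernel-verified Lean document; each statement's English description precedes it below -/
import Mathlib

section
/- For every integer n ≥ 2 and every finite field F with q elements, the graph D(n,q) is edge-transitive: for any two edges {u,v} and {u',v'} of D(n,q) there exists a graph automorphism φ of D(n,q) such that {φ(u), φ(v)} = {u', v'}. -/
/-- The `k`-th coordinate (0-based) of a vector in `F^n`, with junk value `0` out of range. -/
def coordOf {n : ℕ} {F : Type*} [Field F] (v : Fin n → F) (k : ℕ) : F :=
  if h : k < n then v ⟨k, h⟩ else 0

/-- Incidence between a point `p` and a line `l` in the graph `D(n,q)`: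
for every 1-based index `m` with `2 ≤ m ≤ n`, the corresponding defining equation holds.
For `m ∈ {2,3,4}` these are `l₂ - p₂ = l₁p₁`, `l₃ - p₃ = l₂p₁`, `l₄ - p₄ = l₁p₂`, and for
`m ≥ 5` the equation is determined by `m mod 4` following the four equations
`l_i - p_i = l₁ p_{i-2}`, `l_{i+1} - p_{i+1} = l_{i-1} p₁`, `l_{i+2} - p_{i+2} = l_i p₁`,
`l_{i+3} - p_{i+3} = l₁ p_{i+1}` for `i ≡ 1 (mod 4)`, `i ≥ 5`. -/
def DInc (n : ℕ) (F : Type*) [Field F] (p l : Fin n → F) : Prop :=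
  ∀ m : ℕ, 2 ≤ m → m ≤ n →
    coordOf l (m - 1) - coordOf p (m - 1) =
      if m = 2 then coordOf l 0 * coordOf p 0
      else if m = 3 then coordOf l 1 * coordOf p 0
      else if m = 4 then coordOf l 0 * coordOf p 1
      else if m % 4 = 1 ∨ m % 4 = 0 then coordOf l 0 * coordOf p (m - 3)
      else coordOf l (m - 3) * coordOf p 0

/-- The bipartite graph `D(n,q)`: vertices are a disjoint union of points (`Sum.inl`)
and lines (`Sum.inr`), both copies of `F^n`, adjacent iff incident. -/
def DGraph (n : ℕ) (F : Type*) [Field F] :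
    SimpleGraph ((Fin n → F) ⊕ (Fin n → F)) where
  Adj x y :=
    match x, y with
    | Sum.inl p, Sum.inr l => DInc n F p l
    | Sum.inr l, Sum.inl p => DInc n F p l
    | _, _ => False
  symm := ⟨by rintro (p | l) (p' | l') h <;> first | exact h | exact h.elim⟩
  loopless := ⟨by rintro (p | l) h <;> exact h⟩



namespace DT

variable {F : Type*} [Field F]

/-- 0-based index of the `l`-coordinate appearing on the RHS of equation `k`. -/
def li (k : ℕ) : ℕ := if k = 2 then 1 else if k % 4 = 3 ∨ k % 4 = 0 then 0 else k - 2

/-- 0-based index of the `p`-coordinate appearing on the RHS of equation `k`. -/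
def pii (k : ℕ) : ℕ := if k % 4 = 3 ∨ k % 4 = 0 then k - 2 else 0

/-- The `k`-th incidence relation, on `ℕ`-indexed vectors. -/
def Rel (k : ℕ) (l p : ℕ → F) : Prop := l k - p k = l (li k) * p (pii k)

def mm (t : ℕ) : ℕ := if t = 0 then 1 else if t = 1 then 2 else t + 2
def mmp (t : ℕ) : ℕ := if t = 0 then 1 else t + 2

def Lu (t : ℕ) : Prop := t % 4 = 3 ∨ t % 4 = 0 ∨ t = 1
def Pu (t : ℕ) : Prop := t % 4 = 1 ∨ t % 4 = 2 ∨ t = 0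

lemma mm_le (t : ℕ) : mm t ≤ t + 2 := by unfold mm; split_ifs <;> omega
lemma mm_pos (t : ℕ) : 1 ≤ mm t := by unfold mm; split_ifs <;> omega
lemma mmp_le (t : ℕ) : mmp t ≤ t + 2 := by unfold mmp; split_ifs <;> omega
lemma mmp_pos (t : ℕ) : 1 ≤ mmp t := by unfold mmp; split_ifs <;> omega

lemma li_mm (t : ℕ) (h : Lu t) : li (mm t) = t ∧ pii (mm t) = 0 := by
  unfold Lu at h; unfold li pii mm; split_ifs <;> omega

lemma li_mmp (t : ℕ) (h : Pu t) : li (mmp t) = 0 ∧ pii (mmp t) = t := by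
  unfold Pu at h; unfold li pii mmp; split_ifs <;> omega

lemma Pu_mm (t : ℕ) (h : Lu t) : Pu (mm t) := by
  unfold Lu at h; unfold Pu mm; split_ifs <;> omega

lemma Lu_mmp (t : ℕ) (h : Pu t) : Lu (mmp t) := by
  unfold Pu at h; unfold Lu mmp; split_ifs <;> omega

lemma li_lt (k : ℕ) (h : 1 ≤ k) : li k < k := by unfold li; split_ifs <;> omega
lemma pii_lt (k : ℕ) (h : 1 ≤ k) : pii k < k := by unfold pii; split_ifs <;> omega

abbrev LF (F : Type*) [Field F] := F × (ℕ →₀ F)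

/-- Evaluation of an affine functional. -/
def ev (q : LF F) (v : ℕ → F) : F := q.1 + q.2.sum fun t r => r * v t

noncomputable def splitP (q : LF F) : LF F × LF F :=
  ((0, q.2.mapDomain mm), (0, q.2.mapDomain mm + Finsupp.single 0 (-q.1)))

noncomputable def splitL (q : LF F) : LF F × LF F :=
  ((0, q.2.mapDomain mmp + Finsupp.single 0 q.1), (0, q.2.mapDomain mmp))

noncomputable def ABstep (a b : F) (c : ℕ → F) (k : ℕ) (prev : LF F × LF F) : LF F × LF F :=
  if k % 4 = 1 ∨ k % 4 = 2 then
    ((splitP prev.1).1 + (0, Finsupp.single (li k) b) + b • prev.1 + (c k, 0),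
     (splitP prev.1).2 + (c k, 0))
  else
    ((splitL prev.2).1 + (c k, 0),
     ((0 : F), Finsupp.single (pii k) (-a)) + (-a) • prev.2 + (splitL prev.2).2 + (c k, 0))

noncomputable def AB (a b : F) (c : ℕ → F) : ℕ → LF F × LF F
  | 0 => ((a, 0), (b, 0))
  | 1 => ABstep a b c 1 (AB a b c 0)
  | 2 => ABstep a b c 2 (AB a b c 1)
  | (k+3) => ABstep a b c (k+3) (AB a b c (k+1))

def pred2 (k : ℕ) : ℕ := if k = 2 then 1 else k - 2

lemma pred2_lt (k : ℕ) (h : 1 ≤ k) : pred2 k < k := by unfold pred2; split_ifs <;> omega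

lemma AB_eq (a b : F) (c : ℕ → F) (k : ℕ) (hk : 1 ≤ k) :
    AB a b c k = ABstep a b c k (AB a b c (pred2 k)) := by
  match k with
  | 1 => rw [AB]; rfl
  | 2 => rw [AB]; rfl
  | (k+3) =>
    have h2 : pred2 (k+3) = k+1 := by unfold pred2; split_ifs <;> omega
    rw [AB, h2]

end DT
namespace DT

variable {F : Type*} [Field F]

lemma ev_add (q r : LF F) (v : ℕ → F) : ev (q + r) v = ev q v + ev r v := by
  unfold ev
  rw [Prod.fst_add, Prod.snd_add,
    Finsupp.sum_add_index' (fun t => zero_mul (v t)) (fun t r1 r2 => add_mul r1 r2 (v t))]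
  ring

lemma ev_smul (s : F) (q : LF F) (v : ℕ → F) : ev (s • q) v = s * ev q v := by
  unfold ev
  rw [Prod.smul_fst, Prod.smul_snd, Finsupp.sum_smul_index (fun t => zero_mul (v t)),
    smul_eq_mul, mul_add, Finsupp.mul_sum]
  congr 1
  exact Finsupp.sum_congr fun t _ => by ring

lemma ev_const (s : F) (v : ℕ → F) : ev ((s, 0) : LF F) v = s := by
  unfold ev; rw [Finsupp.sum_zero_index]; ring

lemma ev_single (t0 : ℕ) (s : F) (v : ℕ → F) :
    ev (((0 : F), Finsupp.single t0 s) : LF F) v = s * v t0 := by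
  unfold ev
  rw [Finsupp.sum_single_index (zero_mul (v t0))]
  ring

lemma ev_pair_add (f g : ℕ →₀ F) (v : ℕ → F) :
    ev (((0 : F), f + g) : LF F) v = ev ((0 : F), f) v + ev ((0 : F), g) v := by
  have h : (((0 : F), f + g) : LF F) = ((0 : F), f) + ((0 : F), g) := by
    rw [Prod.mk_add_mk, zero_add]
  rw [h, ev_add]

lemma ev_mapDomain (f : ℕ →₀ F) (g : ℕ → ℕ) (v : ℕ → F) :
    ev (((0 : F), f.mapDomain g) : LF F) v = f.sum fun t r => r * v (g t) := by
  unfold ev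
  rw [Finsupp.sum_mapDomain_index (fun b => zero_mul (v b))
    (fun b r1 r2 => add_mul r1 r2 (v b))]
  ring

lemma ev_zero_fun (q : LF F) : ev q (fun _ => (0 : F)) = q.1 := by
  unfold ev
  rw [Finsupp.sum, Finset.sum_congr rfl fun t _ => mul_zero _, Finset.sum_const, smul_zero]
  ring

lemma splitP_spec (q : LF F) (l p : ℕ → F) (K : ℕ)
    (hq : ∀ t ∈ q.2.support, Lu t ∧ t + 2 ≤ K)
    (hrel : ∀ j, 1 ≤ j → j ≤ K → Rel j l p) :
    ev q l * p 0 = ev (splitP q).1 l - ev (splitP q).2 p := by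
  unfold splitP
  rw [ev_mapDomain, ev_pair_add, ev_mapDomain, ev_single]
  have key : ∀ t ∈ q.2.support, ∀ r : F, r * l t * p 0 = r * l (mm t) - r * p (mm t) := by
    intro t ht r
    obtain ⟨hLu, hK⟩ := hq t ht
    have hrel' := hrel (mm t) (mm_pos t) (le_trans (mm_le t) hK)
    unfold Rel at hrel'
    obtain ⟨h1, h2⟩ := li_mm t hLu
    rw [h1, h2] at hrel'
    calc r * l t * p 0 = r * (l t * p 0) := by ring
    _ = r * (l (mm t) - p (mm t)) := by rw [← hrel']
    _ = r * l (mm t) - r * p (mm t) := by ring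
  unfold ev
  rw [add_mul, Finsupp.sum_mul]
  have : (q.2.sum fun t r => r * l t * p 0) =
      q.2.sum fun t r => r * l (mm t) - r * p (mm t) :=
    Finsupp.sum_congr fun t ht => key t ht _
  rw [this, Finsupp.sum_sub]
  ring

lemma splitL_spec (q : LF F) (l p : ℕ → F) (K : ℕ)
    (hq : ∀ t ∈ q.2.support, Pu t ∧ t + 2 ≤ K)
    (hrel : ∀ j, 1 ≤ j → j ≤ K → Rel j l p) :
    l 0 * ev q p = ev (splitL q).1 l - ev (splitL q).2 p := by
  unfold splitL
  rw [ev_mapDomain, ev_pair_add, ev_mapDomain, ev_single]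
  have key : ∀ t ∈ q.2.support, ∀ r : F, l 0 * (r * p t) = r * l (mmp t) - r * p (mmp t) := by
    intro t ht r
    obtain ⟨hPu, hK⟩ := hq t ht
    have hrel' := hrel (mmp t) (mmp_pos t) (le_trans (mmp_le t) hK)
    unfold Rel at hrel'
    obtain ⟨h1, h2⟩ := li_mmp t hPu
    rw [h1, h2] at hrel'
    calc l 0 * (r * p t) = r * (l 0 * p t) := by ring
    _ = r * (l (mmp t) - p (mmp t)) := by rw [← hrel']
    _ = r * l (mmp t) - r * p (mmp t) := by ring
  unfold ev
  rw [mul_add, Finsupp.mul_sum]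
  have : (q.2.sum fun t r => l 0 * (r * p t)) =
      q.2.sum fun t r => r * l (mmp t) - r * p (mmp t) :=
    Finsupp.sum_congr fun t ht => key t ht _
  rw [this, Finsupp.sum_sub]
  ring

end DT
namespace DT

variable {F : Type*} [Field F]

lemma mm_lt_of (s k : ℕ) (h : s < pred2 k) (hk : 1 ≤ k) : mm s < k := by
  unfold mm pred2 at *; split_ifs at * <;> omega

lemma mmp_lt_of (s k : ℕ) (h : s < pred2 k) (hk : 1 ≤ k) : mmp s < k := by
  unfold mmp pred2 at *; split_ifs at * <;> omega

lemma Lu_pred2 (k : ℕ) (hk : 1 ≤ k) (hb : k % 4 = 1 ∨ k % 4 = 2) : Lu (pred2 k) := by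
  unfold Lu pred2; split_ifs <;> omega

lemma Pu_pred2 (k : ℕ) (hk : 1 ≤ k) (hb : ¬(k % 4 = 1 ∨ k % 4 = 2)) : Pu (pred2 k) := by
  unfold Pu pred2; split_ifs <;> omega

lemma Lu_li (k : ℕ) (hk : 1 ≤ k) (hLuk : Lu k) (hb : k % 4 = 1 ∨ k % 4 = 2) : Lu (li k) := by
  unfold Lu li at *; split_ifs <;> omega

lemma Lu_zero : Lu 0 := by unfold Lu; omega
lemma Pu_zero : Pu 0 := by unfold Pu; omega

lemma ABstep_supp (a b : F) (c : ℕ → F) (k : ℕ) (hk : 1 ≤ k) (prev : LF F × LF F)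
    (hA : ∀ t ∈ prev.1.2.support, t < pred2 k ∧ (Lu (pred2 k) → Lu t))
    (hB : ∀ t ∈ prev.2.2.support, t < pred2 k ∧ (Pu (pred2 k) → Pu t)) :
    (∀ t ∈ ((ABstep a b c k prev).1).2.support, t < k ∧ (Lu k → Lu t)) ∧
    (∀ t ∈ ((ABstep a b c k prev).2).2.support, t < k ∧ (Pu k → Pu t)) := by
  by_cases hb : k % 4 = 1 ∨ k % 4 = 2
  · have hLui := Lu_pred2 k hk hb
    have e1 : ((ABstep a b c k prev).1).2 =
        prev.1.2.mapDomain mm + Finsupp.single (li k) b + b • prev.1.2 := by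
      simp [ABstep, if_pos hb, splitP, Prod.smul_snd]
    have e2 : ((ABstep a b c k prev).2).2 =
        prev.1.2.mapDomain mm + Finsupp.single 0 (-prev.1.1) := by
      simp [ABstep, if_pos hb, splitP]
    constructor
    · intro t ht
      rw [e1] at ht
      rcases Finset.mem_union.1 (Finsupp.support_add ht) with h' | h'
      · rcases Finset.mem_union.1 (Finsupp.support_add h') with h'' | h''
        · obtain ⟨s, hs, rfl⟩ := Finset.mem_image.1 (Finsupp.mapDomain_support h'')
          obtain ⟨hslt, _⟩ := hA s hs
          refine ⟨mm_lt_of s k hslt hk, fun hLuk => ?_⟩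
          exfalso
          have hk1 : k = 1 := by unfold Lu at hLuk; omega
          subst hk1
          exact absurd hslt (by norm_num [pred2])
        · have := Finset.mem_singleton.1 (Finsupp.support_single_subset h'')
          subst this
          exact ⟨li_lt k hk, fun hLuk => Lu_li k hk hLuk hb⟩
      · obtain ⟨hslt, hsLu⟩ := hA t (Finsupp.support_smul h')
        exact ⟨lt_trans hslt (pred2_lt k hk), fun _ => hsLu hLui⟩
    · intro t ht
      rw [e2] at ht
      rcases Finset.mem_union.1 (Finsupp.support_add ht) with h' | h'
      · obtain ⟨s, hs, rfl⟩ := Finset.mem_image.1 (Finsupp.mapDomain_support h')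
        obtain ⟨hslt, hsLu⟩ := hA s hs
        exact ⟨mm_lt_of s k hslt hk, fun _ => Pu_mm s (hsLu hLui)⟩
      · have := Finset.mem_singleton.1 (Finsupp.support_single_subset h')
        subst this
        exact ⟨hk, fun _ => Pu_zero⟩
  · have hPuj := Pu_pred2 k hk hb
    have e1 : ((ABstep a b c k prev).1).2 =
        prev.2.2.mapDomain mmp + Finsupp.single 0 prev.2.1 := by
      simp [ABstep, if_neg hb, splitL]
    have e2 : ((ABstep a b c k prev).2).2 =
        Finsupp.single (pii k) (-a) + (-a) • prev.2.2 + prev.2.2.mapDomain mmp := by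
      simp [ABstep, if_neg hb, splitL, Prod.smul_snd]
    have hvac : ¬ Pu k := by unfold Pu; omega
    constructor
    · intro t ht
      rw [e1] at ht
      rcases Finset.mem_union.1 (Finsupp.support_add ht) with h' | h'
      · obtain ⟨s, hs, rfl⟩ := Finset.mem_image.1 (Finsupp.mapDomain_support h')
        obtain ⟨hslt, hsPu⟩ := hB s hs
        exact ⟨mmp_lt_of s k hslt hk, fun _ => Lu_mmp s (hsPu hPuj)⟩
      · have := Finset.mem_singleton.1 (Finsupp.support_single_subset h')
        subst this
        exact ⟨hk, fun _ => Lu_zero⟩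
    · intro t ht
      rw [e2] at ht
      rcases Finset.mem_union.1 (Finsupp.support_add ht) with h' | h'
      · rcases Finset.mem_union.1 (Finsupp.support_add h') with h'' | h''
        · have := Finset.mem_singleton.1 (Finsupp.support_single_subset h'')
          subst this
          exact ⟨pii_lt k hk, fun hPuk => absurd hPuk hvac⟩
        · obtain ⟨hslt, _⟩ := hB t (Finsupp.support_smul h'')
          exact ⟨lt_trans hslt (pred2_lt k hk), fun hPuk => absurd hPuk hvac⟩
      · obtain ⟨s, hs, rfl⟩ := Finset.mem_image.1 (Finsupp.mapDomain_support h')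
        obtain ⟨hslt, _⟩ := hB s hs
        exact ⟨mmp_lt_of s k hslt hk, fun hPuk => absurd hPuk hvac⟩

lemma AB_supp (a b : F) (c : ℕ → F) (k : ℕ) :
    (∀ t ∈ ((AB a b c k).1).2.support, t < k ∧ (Lu k → Lu t)) ∧
    (∀ t ∈ ((AB a b c k).2).2.support, t < k ∧ (Pu k → Pu t)) := by
  induction k using Nat.strong_induction_on with
  | _ k ih =>
    by_cases hk : k = 0
    · subst hk
      have h0 : AB a b c 0 = ((a, 0), (b, 0)) := by rw [AB]
      constructor <;> intro t ht <;> rw [h0] at ht <;> simp at ht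
    · have hk1 : 1 ≤ k := by omega
      rw [AB_eq a b c k hk1]
      exact ABstep_supp a b c k hk1 _ (ih (pred2 k) (pred2_lt k hk1)).1
        (ih (pred2 k) (pred2_lt k hk1)).2

end DT
namespace DT

variable {F : Type*} [Field F]

lemma pred2_succ_le (k : ℕ) (hk : 1 ≤ k) : pred2 k + 1 ≤ k := by
  unfold pred2; split_ifs <;> omega

lemma AB_zero (a b : F) (c : ℕ → F) : AB a b c 0 = ((a, 0), (b, 0)) := by rw [AB]

lemma AB_hom (a b : F) (c : ℕ → F) (l p : ℕ → F) (K : ℕ)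
    (hrel : ∀ j, 1 ≤ j → j ≤ K → Rel j l p) (k : ℕ) (hk1 : 1 ≤ k) (hkK : k ≤ K) :
    Rel k (fun t => l t + ev ((AB a b c t).1) l) (fun t => p t + ev ((AB a b c t).2) p) := by
  have hrelk := hrel k hk1 hkK
  unfold Rel at hrelk ⊢
  simp only
  have hple := pred2_succ_le k hk1
  by_cases hb : k % 4 = 1 ∨ k % 4 = 2
  · have hli : li k = pred2 k := by unfold li pred2; split_ifs <;> omega
    have hpii : pii k = 0 := by unfold pii; split_ifs <;> omega
    have hsupp : ∀ t ∈ ((AB a b c (pred2 k)).1).2.support, Lu t ∧ t + 2 ≤ K := by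
      intro t ht
      obtain ⟨hlt, hLu⟩ := (AB_supp a b c (pred2 k)).1 t ht
      exact ⟨hLu (Lu_pred2 k hk1 hb), by omega⟩
    rw [hli, hpii] at hrelk
    have hsplit := splitP_spec ((AB a b c (pred2 k)).1) l p K hsupp hrel
    have hb0 : ev ((AB a b c 0).2) p = b := by rw [AB_zero]; exact ev_const b p
    rw [AB_eq a b c k hk1, hli, hpii, hb0]
    simp only [ABstep, if_pos hb]
    rw [ev_add, ev_add, ev_add, ev_single, ev_smul, ev_const, ev_add, ev_const, hli]
    linear_combination hrelk - hsplit
  · have hli : li k = 0 := by unfold li; split_ifs <;> omega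
    have hpii : pii k = pred2 k := by unfold pii pred2; split_ifs <;> omega
    have hsupp : ∀ t ∈ ((AB a b c (pred2 k)).2).2.support, Pu t ∧ t + 2 ≤ K := by
      intro t ht
      obtain ⟨hlt, hPu⟩ := (AB_supp a b c (pred2 k)).2 t ht
      exact ⟨hPu (Pu_pred2 k hk1 hb), by omega⟩
    rw [hli, hpii] at hrelk
    have hsplit := splitL_spec ((AB a b c (pred2 k)).2) l p K hsupp hrel
    have ha0 : ev ((AB a b c 0).1) l = a := by rw [AB_zero]; exact ev_const a l
    rw [AB_eq a b c k hk1, hli, hpii, ha0]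
    simp only [ABstep, if_neg hb]
    rw [ev_add, ev_add, ev_add, ev_add, ev_single, ev_smul, ev_const, ev_const, hpii]
    linear_combination hrelk - hsplit

end DT
namespace DT

variable {F : Type*} [Field F]

lemma rhs_eq (k : ℕ) (h1 : 1 ≤ k) (l p : ℕ → F) :
    (if k + 1 = 2 then l 0 * p 0
     else if k + 1 = 3 then l 1 * p 0
     else if k + 1 = 4 then l 0 * p 1
     else if (k + 1) % 4 = 1 ∨ (k + 1) % 4 = 0 then l 0 * p (k + 1 - 3)
     else l (k + 1 - 3) * p 0) = l (li k) * p (pii k) := by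
  rcases Nat.lt_or_ge k 4 with h | h
  · interval_cases k <;> norm_num [li, pii]
  · rw [if_neg (by omega), if_neg (by omega), if_neg (by omega)]
    by_cases hm : (k + 1) % 4 = 1 ∨ (k + 1) % 4 = 0
    · rw [if_pos hm]
      have e1 : li k = 0 := by unfold li; split_ifs <;> omega
      have e2 : pii k = k + 1 - 3 := by unfold pii; split_ifs <;> omega
      rw [e1, e2]
    · rw [if_neg hm]
      have e1 : li k = k + 1 - 3 := by unfold li; split_ifs <;> omega
      have e2 : pii k = 0 := by unfold pii; split_ifs <;> omega
      rw [e1, e2]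

lemma dinc_iff (n : ℕ) (p l : Fin n → F) :
    DInc n F p l ↔ ∀ k, 1 ≤ k → k ≤ n - 1 → Rel k (coordOf l) (coordOf p) := by
  constructor
  · intro h k h1 h2
    have hh := h (k + 1) (by omega) (by omega)
    unfold Rel
    rw [← rhs_eq k h1 (coordOf l) (coordOf p)]
    simpa using hh
  · intro h m h2 hn
    have hm := h (m - 1) (by omega) (by omega)
    unfold Rel at hm
    rw [← rhs_eq (m - 1) (by omega) (coordOf l) (coordOf p)] at hm
    have e : m - 1 + 1 = m := by omega
    rw [e] at hm
    exact hm

noncomputable def phiL (a b : F) (c : ℕ → F) (n : ℕ) (l : Fin n → F) : Fin n → F :=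
  fun i => l i + ev ((AB a b c (i : ℕ)).1) (coordOf l)

noncomputable def phiP (a b : F) (c : ℕ → F) (n : ℕ) (p : Fin n → F) : Fin n → F :=
  fun i => p i + ev ((AB a b c (i : ℕ)).2) (coordOf p)

lemma coordOf_phiL (a b : F) (c : ℕ → F) {n : ℕ} (l : Fin n → F) (t : ℕ) (ht : t < n) :
    coordOf (phiL a b c n l) t = coordOf l t + ev ((AB a b c t).1) (coordOf l) := by
  simp [coordOf, phiL, ht]

lemma coordOf_phiP (a b : F) (c : ℕ → F) {n : ℕ} (p : Fin n → F) (t : ℕ) (ht : t < n) :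
    coordOf (phiP a b c n p) t = coordOf p t + ev ((AB a b c t).2) (coordOf p) := by
  simp [coordOf, phiP, ht]

lemma phi_hom (a b : F) (c : ℕ → F) {n : ℕ} (p l : Fin n → F) (h : DInc n F p l) :
    DInc n F (phiP a b c n p) (phiL a b c n l) := by
  rw [dinc_iff] at h ⊢
  intro k h1 h2
  have main := AB_hom a b c (coordOf l) (coordOf p) (n - 1) h k h1 h2
  unfold Rel at main ⊢
  have hkn : k < n := by omega
  have h2' : li k < n := lt_trans (li_lt k h1) hkn
  have h3' : pii k < n := lt_trans (pii_lt k h1) hkn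
  rw [coordOf_phiL a b c l k hkn, coordOf_phiP a b c p k hkn,
    coordOf_phiL a b c l (li k) h2', coordOf_phiP a b c p (pii k) h3']
  simpa using main

lemma phiP_inj (a b : F) (c : ℕ → F) (n : ℕ) : Function.Injective (phiP a b c n) := by
  intro v w hvw
  have key : ∀ t, coordOf v t = coordOf w t := by
    intro t
    induction t using Nat.strong_induction_on with
    | _ t ih =>
      by_cases ht : t < n
      · have hv := congrFun hvw ⟨t, ht⟩
        have hev : ev ((AB a b c t).2) (coordOf v) = ev ((AB a b c t).2) (coordOf w) := by
          unfold ev; congr 1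
          apply Finsupp.sum_congr
          intro s hs
          rw [ih s ((AB_supp a b c t).2 s hs).1]
        simp only [phiP] at hv
        simp only [coordOf, dif_pos ht]
        have hv' : v ⟨t, ht⟩ + ev ((AB a b c t).2) (coordOf v) =
            w ⟨t, ht⟩ + ev ((AB a b c t).2) (coordOf w) := hv
        rw [hev] at hv'
        exact add_right_cancel hv'
      · simp [coordOf, ht]
  funext i
  have hi := key (i : ℕ)
  simpa [coordOf, i.isLt] using hi

lemma phiL_inj (a b : F) (c : ℕ → F) (n : ℕ) : Function.Injective (phiL a b c n) := by
  intro v w hvw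
  have key : ∀ t, coordOf v t = coordOf w t := by
    intro t
    induction t using Nat.strong_induction_on with
    | _ t ih =>
      by_cases ht : t < n
      · have hv := congrFun hvw ⟨t, ht⟩
        have hev : ev ((AB a b c t).1) (coordOf v) = ev ((AB a b c t).1) (coordOf w) := by
          unfold ev; congr 1
          apply Finsupp.sum_congr
          intro s hs
          rw [ih s ((AB_supp a b c t).1 s hs).1]
        simp only [phiL] at hv
        simp only [coordOf, dif_pos ht]
        have hv' : v ⟨t, ht⟩ + ev ((AB a b c t).1) (coordOf v) =
            w ⟨t, ht⟩ + ev ((AB a b c t).1) (coordOf w) := hv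
        rw [hev] at hv'
        exact add_right_cancel hv'
      · simp [coordOf, ht]
  funext i
  have hi := key (i : ℕ)
  simpa [coordOf, i.isLt] using hi

end DT
namespace DT

variable {F : Type*} [Field F]

lemma ABstep_c (a b : F) (c1 c2 : ℕ → F) (k : ℕ) (h : c1 k = c2 k) (prev : LF F × LF F) :
    ABstep a b c1 k prev = ABstep a b c2 k prev := by
  unfold ABstep; rw [h]

lemma AB_congr (a b : F) (c1 c2 : ℕ → F) (k : ℕ) (h : ∀ j ≤ k, c1 j = c2 j) :
    AB a b c1 k = AB a b c2 k := by
  revert h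
  induction k using Nat.strong_induction_on with
  | _ k ih =>
    intro h
    by_cases hk : k = 0
    · subst hk; rw [AB_zero, AB_zero]
    · have hk1 : 1 ≤ k := by omega
      have hp := pred2_lt k hk1
      rw [AB_eq a b c1 k hk1, AB_eq a b c2 k hk1,
        ih (pred2 k) hp (fun j hj => h j (by omega)),
        ABstep_c a b c1 c2 k (h k le_rfl)]

lemma pair_shift (X : LF F) (s t : F) : X + (s, (0 : ℕ →₀ F)) = X + (t, 0) + (s - t, 0) := by
  rw [add_assoc]
  congr 1
  rw [Prod.mk_add_mk, Prod.ext_iff]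
  constructor
  · simp only; ring
  · simp

lemma AB_c_shift (a b : F) (c1 c2 : ℕ → F) (k : ℕ) (hk : 1 ≤ k)
    (hlow : ∀ j, j < k → c1 j = c2 j) :
    (AB a b c1 k).2 = (AB a b c2 k).2 + (c1 k - c2 k, 0) := by
  have hp := pred2_lt k hk
  rw [AB_eq a b c1 k hk, AB_eq a b c2 k hk,
    AB_congr a b c1 c2 (pred2 k) (fun j hj => hlow j (by omega))]
  unfold ABstep
  by_cases hb : k % 4 = 1 ∨ k % 4 = 2
  · rw [if_pos hb, if_pos hb]
    exact pair_shift _ (c1 k) (c2 k)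
  · rw [if_neg hb, if_neg hb]
    exact pair_shift _ (c1 k) (c2 k)

noncomputable def cc (a : F) (P : ℕ → F) : ℕ → F
  | k => -(P k) - ev ((AB a (-(P 0)) (fun j => if h : j < k then cc a P j else 0) k).2) P
termination_by k => k
decreasing_by exact h

lemma ev_pair_const (X : LF F) (s : F) (v : ℕ → F) : ev (X + (s, 0)) v = ev X v + s := by
  rw [ev_add, ev_const]

lemma cc_spec (a : F) (P : ℕ → F) (k : ℕ) (hk : 1 ≤ k) :
    ev ((AB a (-(P 0)) (cc a P) k).2) P = -(P k) := by
  have hcc : cc a P k =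
      -(P k) - ev ((AB a (-(P 0)) (fun j => if _ : j < k then cc a P j else 0) k).2) P := by
    rw [cc]
  have hshift := AB_c_shift a (-(P 0)) (cc a P)
    (fun j => if _ : j < k then cc a P j else 0) k hk
    (fun j hj => by show cc a P j = if _ : j < k then cc a P j else 0; rw [dif_pos hj])
  rw [hshift, ev_pair_const, hcc]
  simp only [dif_neg (lt_irrefl k)]
  ring

end DT
namespace DT

variable {F : Type*} [Field F]

lemma iso_exists {V : Type*} [Finite V] (G : SimpleGraph V) (e : Equiv.Perm V)
    (he : ∀ x y, G.Adj x y → G.Adj (e x) (e y)) : ∃ φ : G ≃g G, ∀ x, φ x = e x := by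
  have hpow : ∀ (j : ℕ) (x y), G.Adj x y → G.Adj ((e ^ j) x) ((e ^ j) y) := by
    intro j
    induction j with
    | zero => intro x y h; simpa using h
    | succ j ih =>
      intro x y h
      have h2 := ih _ _ (he x y h)
      rw [pow_succ]
      simpa [Equiv.Perm.mul_apply] using h2
  refine ⟨⟨e, ?_⟩, fun x => rfl⟩
  intro x y
  constructor
  · intro hadj
    have hpos : 0 < orderOf e := orderOf_pos e
    have h2 := hpow (orderOf e - 1) _ _ hadj
    rw [← Equiv.Perm.mul_apply, ← Equiv.Perm.mul_apply, ← pow_succ] at h2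
    have hord : orderOf e - 1 + 1 = orderOf e := by omega
    rw [hord, pow_orderOf_eq_one] at h2
    simpa using h2
  · exact he x y

lemma coordOf_zero (n t : ℕ) : coordOf (0 : Fin n → F) t = 0 := by
  unfold coordOf; split_ifs <;> rfl

lemma normalize [Fintype F] (n : ℕ) (p l : Fin n → F) (h : DInc n F p l) :
    ∃ φ : DGraph n F ≃g DGraph n F,
      φ (Sum.inl p) = Sum.inl 0 ∧ φ (Sum.inr l) = Sum.inr 0 := by
  classical
  set P : ℕ → F := coordOf p with hP
  set L : ℕ → F := coordOf l with hL
  set a : F := -(L 0) with ha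
  set b : F := -(P 0) with hb
  set c : ℕ → F := cc a P with hc
  have ePbij : Function.Bijective (phiP a b c n) :=
    Finite.injective_iff_bijective.1 (phiP_inj a b c n)
  have eLbij : Function.Bijective (phiL a b c n) :=
    Finite.injective_iff_bijective.1 (phiL_inj a b c n)
  let eP : (Fin n → F) ≃ (Fin n → F) := Equiv.ofBijective _ ePbij
  let eL : (Fin n → F) ≃ (Fin n → F) := Equiv.ofBijective _ eLbij
  let e : Equiv.Perm ((Fin n → F) ⊕ (Fin n → F)) := Equiv.sumCongr eP eL
  have he : ∀ x y, (DGraph n F).Adj x y → (DGraph n F).Adj (e x) (e y) := by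
    rintro (p1 | l1) (p2 | l2) hxy
    · exact hxy.elim
    · exact phi_hom a b c p1 l2 hxy
    · exact phi_hom a b c p2 l1 hxy
    · exact hxy.elim
  obtain ⟨φ, hφ⟩ := iso_exists (DGraph n F) e he
  -- the image of p is 0
  have hP0 : phiP a b c n p = 0 := by
    funext i
    show p i + ev ((AB a b c (i : ℕ)).2) P = 0
    have hPi : P (i : ℕ) = p i := by simp [hP, coordOf, i.isLt]
    by_cases hi : (i : ℕ) = 0
    · rw [hi, AB_zero, ev_const, ← hPi, hi, hb]
      ring
    · rw [hc, hb, cc_spec a P (i : ℕ) (by omega), hPi]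
      ring
  have hL0 : phiL a b c n l = 0 := by
    have himg : DInc n F (phiP a b c n p) (phiL a b c n l) := phi_hom a b c p l h
    rw [hP0] at himg
    rw [dinc_iff] at himg
    funext i
    have hLi : L (i : ℕ) = l i := by simp [hL, coordOf, i.isLt]
    by_cases hi : (i : ℕ) = 0
    · show l i + ev ((AB a b c (i : ℕ)).1) L = 0
      rw [hi, AB_zero, ev_const, ← hLi, hi, ha]
      ring
    · have hrel := himg (i : ℕ) (by omega) (by have := i.isLt; omega)
      unfold Rel at hrel
      rw [coordOf_zero, coordOf_zero, mul_zero, sub_zero] at hrel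
      have : coordOf (phiL a b c n l) (i : ℕ) = phiL a b c n l i := by
        simp [coordOf, i.isLt]
      rw [this] at hrel
      rw [hrel]; rfl
  refine ⟨φ, ?_, ?_⟩
  · rw [hφ]
    show Sum.inl (eP p) = Sum.inl (0 : Fin n → F)
    have : eP p = phiP a b c n p := rfl
    rw [this, hP0]
  · rw [hφ]
    show Sum.inr (eL l) = Sum.inr (0 : Fin n → F)
    have : eL l = phiL a b c n l := rfl
    rw [this, hL0]

end DT

/-- `D(n,q)` is edge-transitive: for any two edges `{u,v}`, `{u',v'}` there is a graph
automorphism `φ` with `{φ u, φ v} = {u', v'}`. -/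
theorem DGraph_edge_transitive (n : ℕ) (hn : 2 ≤ n) (F : Type*) [Field F] [Fintype F]
    (u v u' v' : (Fin n → F) ⊕ (Fin n → F))
    (h : (DGraph n F).Adj u v) (h' : (DGraph n F).Adj u' v') :
    ∃ φ : DGraph n F ≃g DGraph n F,
      (φ u = u' ∧ φ v = v') ∨ (φ u = v' ∧ φ v = u') := by
  classical
  rcases u with p1 | l1 <;> rcases v with p2 | l2
  · exact h.elim
  case inl.inr =>
    have hD : DInc n F p1 l2 := h
    obtain ⟨ψ, hψ1, hψ2⟩ := DT.normalize n p1 l2 hD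
    rcases u' with q1 | m1 <;> rcases v' with q2 | m2
    · exact h'.elim
    case inl.inr =>
      have hD' : DInc n F q1 m2 := h'
      obtain ⟨ψ', hψ'1, hψ'2⟩ := DT.normalize n q1 m2 hD'
      refine ⟨ψ.trans ψ'.symm, Or.inl ⟨?_, ?_⟩⟩
      · show ψ'.symm (ψ (Sum.inl p1)) = _
        rw [hψ1, ← hψ'1, RelIso.symm_apply_apply]
      · show ψ'.symm (ψ (Sum.inr l2)) = _
        rw [hψ2, ← hψ'2, RelIso.symm_apply_apply]
    case inr.inl =>
      have hD' : DInc n F q2 m1 := h'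
      obtain ⟨ψ', hψ'1, hψ'2⟩ := DT.normalize n q2 m1 hD'
      refine ⟨ψ.trans ψ'.symm, Or.inr ⟨?_, ?_⟩⟩
      · show ψ'.symm (ψ (Sum.inl p1)) = _
        rw [hψ1, ← hψ'1, RelIso.symm_apply_apply]
      · show ψ'.symm (ψ (Sum.inr l2)) = _
        rw [hψ2, ← hψ'2, RelIso.symm_apply_apply]
    · exact h'.elim
  case inr.inl =>
    have hD : DInc n F p2 l1 := h
    obtain ⟨ψ, hψ1, hψ2⟩ := DT.normalize n p2 l1 hD
    rcases u' with q1 | m1 <;> rcases v' with q2 | m2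
    · exact h'.elim
    case inl.inr =>
      have hD' : DInc n F q1 m2 := h'
      obtain ⟨ψ', hψ'1, hψ'2⟩ := DT.normalize n q1 m2 hD'
      refine ⟨ψ.trans ψ'.symm, Or.inr ⟨?_, ?_⟩⟩
      · show ψ'.symm (ψ (Sum.inr l1)) = _
        rw [hψ2, ← hψ'2, RelIso.symm_apply_apply]
      · show ψ'.symm (ψ (Sum.inl p2)) = _
        rw [hψ1, ← hψ'1, RelIso.symm_apply_apply]
    case inr.inl =>
      have hD' : DInc n F q2 m1 := h'
      obtain ⟨ψ', hψ'1, hψ'2⟩ := DT.normalize n q2 m1 hD'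
      refine ⟨ψ.trans ψ'.symm, Or.inl ⟨?_, ?_⟩⟩
      · show ψ'.symm (ψ (Sum.inr l1)) = _
        rw [hψ2, ← hψ'2, RelIso.symm_apply_apply]
      · show ψ'.symm (ψ (Sum.inl p2)) = _
        rw [hψ1, ← hψ'1, RelIso.symm_apply_apply]
    · exact h'.elim
  · exact h.elim
end

section
/- For every integer n ≥ 6 and every finite field F with q elements, the graph D(n,q) is disconnected: there exist two vertices of D(n,q) with no walk between them. -/
/-- The invariant `p₂² - p₁p₄ + p₅ - p₆` of a point. -/
def pInv {n : ℕ} {F : Type*} [Field F] (p : Fin n → F) : F :=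
  coordOf p 1 ^ 2 - coordOf p 0 * coordOf p 3 + coordOf p 4 - coordOf p 5

/-- The invariant `l₂² - l₁l₃ + l₅ - l₆` of a line. -/
def lInv {n : ℕ} {F : Type*} [Field F] (l : Fin n → F) : F :=
  coordOf l 1 ^ 2 - coordOf l 0 * coordOf l 2 + coordOf l 4 - coordOf l 5

/-- Combined vertex invariant. -/
def vInv {n : ℕ} {F : Type*} [Field F] (x : (Fin n → F) ⊕ (Fin n → F)) : F :=
  Sum.elim pInv lInv x

lemma inv_eq_of_inc {n : ℕ} (hn : 6 ≤ n) {F : Type*} [Field F] {p l : Fin n → F}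
    (h : DInc n F p l) : pInv p = lInv l := by
  have e2 := h 2 (by omega) (by omega)
  have e3 := h 3 (by omega) (by omega)
  have e4 := h 4 (by omega) (by omega)
  have e5 := h 5 (by omega) (by omega)
  have e6 := h 6 (by omega) (by omega)
  norm_num at e2 e3 e4 e5 e6
  unfold pInv lInv
  linear_combination (-(coordOf l 1) - coordOf p 1) * e2 + coordOf l 0 * e3 +
    coordOf p 0 * e4 - e5 + e6

lemma inv_eq_of_adj {n : ℕ} (hn : 6 ≤ n) {F : Type*} [Field F]
    {u v : (Fin n → F) ⊕ (Fin n → F)} (h : (DGraph n F).Adj u v) : vInv u = vInv v := by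
  rcases u with p | l <;> rcases v with p' | l'
  · exact h.elim
  · exact inv_eq_of_inc hn h
  · exact (inv_eq_of_inc hn h).symm
  · exact h.elim

lemma inv_eq_of_reachable {n : ℕ} (hn : 6 ≤ n) {F : Type*} [Field F]
    {u v : (Fin n → F) ⊕ (Fin n → F)} (h : (DGraph n F).Reachable u v) :
    vInv u = vInv v := by
  obtain ⟨w⟩ := h
  induction w with
  | nil => rfl
  | cons ha _ ih => exact (inv_eq_of_adj hn ha).trans ih

/-- For `n ≥ 6` the graph `D(n,q)` is disconnected: some two vertices admit no walk
between them. -/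
theorem DGraph_disconnected (n : ℕ) (hn : 6 ≤ n) (F : Type*) [Field F] [Fintype F] :
    ∃ u v : (Fin n → F) ⊕ (Fin n → F), ¬ (DGraph n F).Reachable u v := by
  classical
  refine ⟨Sum.inl (fun _ => 0),
    Sum.inl (fun i => if (i : ℕ) = 4 then 1 else 0), fun hr => ?_⟩
  have := inv_eq_of_reachable hn hr
  simp only [vInv, Sum.elim_inl, pInv, coordOf] at this
  have h0 : (0:ℕ) < n := by omega
  have h1 : (1:ℕ) < n := by omega
  have h3 : (3:ℕ) < n := by omega
  have h4 : (4:ℕ) < n := by omega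
  have h5 : (5:ℕ) < n := by omega
  rw [dif_pos h0, dif_pos h1, dif_pos h3, dif_pos h4, dif_pos h5] at this
  norm_num at this
  omega
end
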